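/- Let p = 2 and w = (a_0,…,a_5) ∈ V_5 over 𝔽_2 with Cat_{2,2}(x,y:w) ≠ 0. Then there is an integer C with |C| ≤ 2 such that S(w) = C·p² = 4C; in particular S(w) ∈ {−8, −4, 0, 4, 8}. -/

import Mathlib

open Finset

/-- Multiplication of binary forms encoded by coefficient tuples: a binary form
`∑ i, f i • x^(a-i) * y^i` of degree `a` is encoded as the tuple `f : Fin (a+1) → k`,
and multiplication of forms is convolution of coefficient tuples. -/
def formMul {k : Type*} [CommRing k] {a b : ℕ} (f : Fin (a + 1) → k)
    (g : Fin (b + 1) → k) : Fin (a + b + 1) → k :=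
  fun i => ∑ q : Fin (a + 1) × Fin (b + 1),
    if (q.1 : ℕ) + (q.2 : ℕ) = (i : ℕ) then f q.1 * g q.2 else 0

/-- The pairing `(w, v) = ∑ i, w i * v i` between `V_n` and `V_n^*`. -/
def pair {k : Type*} [CommRing k] {n : ℕ} (w v : Fin (n + 1) → k) : k :=
  ∑ i, w i * v i

/-- A binary quintic form is singular if it is nonzero and, over an algebraic closure,
it is divisible by the square of a nonzero linear form. -/
def IsSingularQuintic {k : Type*} [Field k] (v : Fin 6 → k) : Prop :=
  v ≠ 0 ∧ ∃ (l : Fin 2 → AlgebraicClosure k) (c : Fin 4 → AlgebraicClosure k),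
    l ≠ 0 ∧
    (fun i => algebraMap k (AlgebraicClosure k) (v i)) = formMul (formMul l l) c

open scoped Classical in
/-- The exponential sum `S(w)` over binary quintic forms that are zero or singular. -/
noncomputable def expSum (p : ℕ) [Fact p.Prime] (w : Fin 6 → ZMod p) : ℂ :=
  ∑ v : Fin 6 → ZMod p,
    if v = 0 ∨ IsSingularQuintic v then
      Complex.exp (2 * Real.pi * Complex.I * ((pair w v).val : ℂ) / (p : ℂ))
    else 0

/-- The catalecticant covariant `Cat_{2,2}(x,y:w) = det (x•A₁ - y•A₀)`, a binary cubic
form, regarded as a polynomial in the two variables `x = X 0` and `y = X 1`. -/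
noncomputable def cat22 {k : Type*} [CommRing k] (w : Fin 6 → k) :
    MvPolynomial (Fin 2) k :=
  Matrix.det (Matrix.of fun i j : Fin 3 =>
    MvPolynomial.X 0 * MvPolynomial.C (w ⟨(i : ℕ) + (j : ℕ) + 1, by omega⟩) -
    MvPolynomial.X 1 * MvPolynomial.C (w ⟨(i : ℕ) + (j : ℕ), by omega⟩))

/-! ### Auxiliary material -/

abbrev myK : Type := AlgebraicClosure (ZMod 2)

lemma two_eq_zero_K : (2 : myK) = 0 := by
  have := CharP.cast_eq_zero myK 2
  simpa using this

noncomputable def omK : myK := Classical.choose (IsAlgClosed.exists_root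
  (Polynomial.X ^ 2 + Polynomial.X + 1 : Polynomial myK)
  (by
    have h : (Polynomial.X ^ 2 + Polynomial.X + 1 : Polynomial myK).degree = 2 := by
      compute_degree!
    simp [h]))

lemma omK_spec : omK ^ 2 + omK + 1 = 0 := by
  have := Classical.choose_spec (IsAlgClosed.exists_root
    (Polynomial.X ^ 2 + Polynomial.X + 1 : Polynomial myK)
    (by
      have h : (Polynomial.X ^ 2 + Polynomial.X + 1 : Polynomial myK).degree = 2 := by
        compute_degree!
      simp [h]))
  simpa [Polynomial.IsRoot, omK] using this

def f4mul (x y : ZMod 2 × ZMod 2) : ZMod 2 × ZMod 2 :=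
  (x.1 * y.1 + x.2 * y.2, x.1 * y.2 + x.2 * y.1 + x.2 * y.2)

def f4Q (c0 c2 c4 : ZMod 2) (s u : ZMod 2 × ZMod 2) : ZMod 2 × ZMod 2 :=
  (c0 * (f4mul u u).1 + c2 * (f4mul s u).1 + c4 * (f4mul s s).1,
   c0 * (f4mul u u).2 + c2 * (f4mul s u).2 + c4 * (f4mul s s).2)

def RF (v : Fin 6 → ZMod 2) : ZMod 2 :=
  (v 0 * v 5 - v 4 * v 1) ^ 2 - (v 0 * v 3 - v 2 * v 1) * (v 2 * v 5 - v 4 * v 3)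

lemma modelComplete : ∀ v : Fin 6 → ZMod 2, RF v = 0 →
    ∃ s u : ZMod 2 × ZMod 2, ¬(s = (0, 0) ∧ u = (0, 0)) ∧
      f4Q (v 0) (v 2) (v 4) s u = (0, 0) ∧ f4Q (v 1) (v 3) (v 5) s u = (0, 0) := by
  decide

noncomputable def phiM (x : ZMod 2 × ZMod 2) : myK :=
  algebraMap (ZMod 2) myK x.1 + algebraMap (ZMod 2) myK x.2 * omK

local notation "ι" => algebraMap (ZMod 2) myK

lemma phiM_eq_zero {x : ZMod 2 × ZMod 2} (h : phiM x = 0) : x = (0, 0) := by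
  have hcase : ∀ a : ZMod 2, a = 0 ∨ a = 1 := by decide
  rcases hcase x.1 with h1 | h1 <;> rcases hcase x.2 with h2 | h2 <;>
    simp only [phiM, h1, h2, map_zero, map_one, zero_add, one_mul, zero_mul, add_zero] at h ⊢
  · exact Prod.ext h1 h2
  · exfalso
    have : omK ^ 2 + omK + 1 = 0 := omK_spec
    rw [h] at this; simp at this
  · exfalso; simp at h
  · exfalso
    have hom : omK = 1 := by linear_combination h - two_eq_zero_K
    have := omK_spec
    rw [hom] at this
    have h3 : (3 : myK) = 0 := by linear_combination this
    have : (1 : myK) = 0 := by linear_combination h3 - two_eq_zero_K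
    simp at this

lemma phiM_Q (c0 c2 c4 : ZMod 2) (s u : ZMod 2 × ZMod 2) :
    phiM (f4Q c0 c2 c4 s u)
      = ι c0 * phiM u ^ 2 + ι c2 * (phiM s * phiM u) + ι c4 * phiM s ^ 2 := by
  simp only [f4Q, f4mul, phiM, map_add, map_mul]
  linear_combination (ι c0 * ι u.2 ^ 2 + ι c2 * (ι s.2 * ι u.2) + ι c4 * ι s.2 ^ 2) * omK_spec
    - (omK ^ 2 * (ι c0 * ι u.2 ^ 2 + ι c2 * (ι s.2 * ι u.2) + ι c4 * ι s.2 ^ 2)) * two_eq_zero_K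

lemma formMul_coords {R : Type*} [CommRing R] (l : Fin 2 → R) (c : Fin 4 → R) :
    formMul (formMul l l) c 0 = l 0 * l 0 * c 0 ∧
    formMul (formMul l l) c 1 = l 0 * l 0 * c 1 + (l 0 * l 1 + l 1 * l 0) * c 0 ∧
    formMul (formMul l l) c 2
      = l 0 * l 0 * c 2 + (l 0 * l 1 + l 1 * l 0) * c 1 + l 1 * l 1 * c 0 ∧
    formMul (formMul l l) c 3
      = l 0 * l 0 * c 3 + (l 0 * l 1 + l 1 * l 0) * c 2 + l 1 * l 1 * c 1 ∧
    formMul (formMul l l) c 4 = (l 0 * l 1 + l 1 * l 0) * c 3 + l 1 * l 1 * c 2 ∧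
    formMul (formMul l l) c 5 = l 1 * l 1 * c 3 := by
  refine ⟨?_, ?_, ?_, ?_, ?_, ?_⟩ <;>
    simp [formMul, Fintype.sum_prod_type, Fin.sum_univ_succ,
      show (Fin.succ 2 : Fin 4) = 3 from rfl, show (Fin.succ 1 : Fin 3) = 2 from rfl,
      show ((0:Fin 6):ℕ) = 0 from rfl, show ((1:Fin 6):ℕ) = 1 from rfl,
      show ((2:Fin 6):ℕ) = 2 from rfl, show ((3:Fin 6):ℕ) = 3 from rfl,
      show ((4:Fin 6):ℕ) = 4 from rfl, show ((5:Fin 6):ℕ) = 5 from rfl] <;>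
    ring

lemma sing_to_root {v : Fin 6 → ZMod 2} (h : IsSingularQuintic v) :
    ∃ S U : myK, ¬(S = 0 ∧ U = 0) ∧
      ι (v 0) * U ^ 2 + ι (v 2) * S * U + ι (v 4) * S ^ 2 = 0 ∧
      ι (v 1) * U ^ 2 + ι (v 3) * S * U + ι (v 5) * S ^ 2 = 0 := by
  obtain ⟨hv0, l, c, hl, hv⟩ := h
  obtain ⟨e0, e1, e2, e3, e4, e5⟩ := formMul_coords l c
  have h0 : ι (v 0) = l 0 * l 0 * c 0 := by rw [← e0]; exact congrFun hv 0
  have h1 : ι (v 1) = l 0 * l 0 * c 1 + (l 0 * l 1 + l 1 * l 0) * c 0 := by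
    rw [← e1]; exact congrFun hv 1
  have h2 : ι (v 2) = l 0 * l 0 * c 2 + (l 0 * l 1 + l 1 * l 0) * c 1 + l 1 * l 1 * c 0 := by
    rw [← e2]; exact congrFun hv 2
  have h3 : ι (v 3) = l 0 * l 0 * c 3 + (l 0 * l 1 + l 1 * l 0) * c 2 + l 1 * l 1 * c 1 := by
    rw [← e3]; exact congrFun hv 3
  have h4 : ι (v 4) = (l 0 * l 1 + l 1 * l 0) * c 3 + l 1 * l 1 * c 2 := by
    rw [← e4]; exact congrFun hv 4
  have h5 : ι (v 5) = l 1 * l 1 * c 3 := by rw [← e5]; exact congrFun hv 5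
  refine ⟨l 0 ^ 2, l 1 ^ 2, ?_, ?_, ?_⟩
  · rintro ⟨hS, hU⟩
    apply hl
    funext j
    fin_cases j
    · simpa using pow_eq_zero_iff (two_ne_zero) |>.mp hS
    · simpa using pow_eq_zero_iff (two_ne_zero) |>.mp hU
  · linear_combination (l 1 ^ 2) ^ 2 * h0 + (l 0 ^ 2 * l 1 ^ 2) * h2 + (l 0 ^ 2) ^ 2 * h4 +
      (c 0 * l 0 ^ 2 * l 1 ^ 4 + c 1 * l 0 ^ 3 * l 1 ^ 3 + c 2 * l 0 ^ 4 * l 1 ^ 2 +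
        c 3 * l 0 ^ 5 * l 1) * two_eq_zero_K
  · linear_combination (l 1 ^ 2) ^ 2 * h1 + (l 0 ^ 2 * l 1 ^ 2) * h3 + (l 0 ^ 2) ^ 2 * h5 +
      (c 0 * l 0 * l 1 ^ 5 + c 1 * l 0 ^ 2 * l 1 ^ 4 + c 2 * l 0 ^ 3 * l 1 ^ 3 +
        c 3 * l 0 ^ 4 * l 1 ^ 2) * two_eq_zero_K

lemma funext6 {f g : Fin 6 → myK} (h0 : f 0 = g 0) (h1 : f 1 = g 1) (h2 : f 2 = g 2)
    (h3 : f 3 = g 3) (h4 : f 4 = g 4) (h5 : f 5 = g 5) : f = g := by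
  funext i; fin_cases i <;> assumption

set_option maxHeartbeats 1000000 in
lemma root_to_sing {v : Fin 6 → ZMod 2} (hv : v ≠ 0) (S U : myK)
    (hSU : ¬(S = 0 ∧ U = 0))
    (h0 : ι (v 0) * U ^ 2 + ι (v 2) * S * U + ι (v 4) * S ^ 2 = 0)
    (h1 : ι (v 1) * U ^ 2 + ι (v 3) * S * U + ι (v 5) * S ^ 2 = 0) :
    IsSingularQuintic v := by
  obtain ⟨a, ha⟩ : ∃ a : myK, a ^ 2 = S := IsAlgClosed.exists_pow_nat_eq S (by norm_num)
  obtain ⟨b, hb⟩ : ∃ b : myK, b ^ 2 = U := IsAlgClosed.exists_pow_nat_eq U (by norm_num)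
  rw [← ha, ← hb] at h0 h1 hSU
  by_cases haz : a = 0
  · have hbz : b ≠ 0 := by
      intro hb0
      exact hSU ⟨by rw [haz]; ring, by rw [hb0]; ring⟩
    have hb2 : b ^ 2 ≠ 0 := pow_ne_zero _ hbz
    have hz0 : ι (v 0) = 0 := by
      have : ι (v 0) * (b ^ 2) ^ 2 = 0 := by linear_combination h0 - (ι (v 2) * b ^ 2 + ι (v 4) * a ^ 2) * (by rw [haz]; ring : a ^ 2 = 0)
      exact (mul_eq_zero.mp this).resolve_right (pow_ne_zero _ hb2)
    have hz1 : ι (v 1) = 0 := by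
      have : ι (v 1) * (b ^ 2) ^ 2 = 0 := by linear_combination h1 - (ι (v 3) * b ^ 2 + ι (v 5) * a ^ 2) * (by rw [haz]; ring : a ^ 2 = 0)
      exact (mul_eq_zero.mp this).resolve_right (pow_ne_zero _ hb2)
    refine ⟨hv, ![a, b], ![ι (v 2) / b ^ 2, ι (v 3) / b ^ 2, ι (v 4) / b ^ 2, ι (v 5) / b ^ 2],
      ?_, ?_⟩
    · intro h
      exact hbz (by simpa using congrFun h 1)
    · obtain ⟨e0, e1, e2, e3, e4, e5⟩ := formMul_coords ![a, b]
        ![ι (v 2) / b ^ 2, ι (v 3) / b ^ 2, ι (v 4) / b ^ 2, ι (v 5) / b ^ 2]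
      apply funext6
      · rw [e0]; simp [haz, hz0]
      · rw [e1]; simp [haz, hz1]
      · rw [e2]; simp [haz]; field_simp; try ring
      · rw [e3]; simp [haz]; field_simp; try ring
      · rw [e4]; simp [haz]; field_simp; try ring
      · rw [e5]; simp [haz]; field_simp; try ring
  · have ha2 : a ^ 2 ≠ 0 := pow_ne_zero _ haz
    refine ⟨hv, ![a, b], ![ι (v 0) / a ^ 2, ι (v 1) / a ^ 2,
      (ι (v 2) - b ^ 2 * ι (v 0) / a ^ 2) / a ^ 2,
      (ι (v 3) - b ^ 2 * ι (v 1) / a ^ 2) / a ^ 2], ?_, ?_⟩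
    · intro h
      exact haz (by simpa using congrFun h 0)
    · obtain ⟨e0, e1, e2, e3, e4, e5⟩ := formMul_coords ![a, b]
        ![ι (v 0) / a ^ 2, ι (v 1) / a ^ 2, (ι (v 2) - b ^ 2 * ι (v 0) / a ^ 2) / a ^ 2,
          (ι (v 3) - b ^ 2 * ι (v 1) / a ^ 2) / a ^ 2]
      apply funext6
      · rw [e0]; simp; field_simp
      · rw [e1]; simp; field_simp; linear_combination (-(b * ι (v 0))) * two_eq_zero_K
      · rw [e2]; simp; field_simp; linear_combination (-(a * b * ι (v 1))) * two_eq_zero_K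
      · rw [e3]; simp; field_simp; linear_combination (b ^ 3 * ι (v 0) - a ^ 2 * b * ι (v 2)) * two_eq_zero_K
      · rw [e4]; simp; field_simp; linear_combination (a * b ^ 3 * ι (v 1) - a ^ 2 * b ^ 2 * ι (v 2) - a ^ 3 * b * ι (v 3)) * two_eq_zero_K + h0
      · rw [e5]; simp; field_simp; linear_combination h1 + (-(a ^ 2 * b ^ 2 * ι (v 3))) * two_eq_zero_K

/-- Resultant certificate: if the resultant of the two quadratics is nonzero then there
is no nonzero common root. -/
lemma noCommonRoot {F : Type*} [Field F] (c0 c1 c2 c3 c4 c5 S U : F)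
    (h0 : c0 * U ^ 2 + c2 * S * U + c4 * S ^ 2 = 0)
    (h1 : c1 * U ^ 2 + c3 * S * U + c5 * S ^ 2 = 0)
    (hR : (c0 * c5 - c4 * c1) ^ 2 - (c0 * c3 - c2 * c1) * (c2 * c5 - c4 * c3) ≠ 0) :
    S = 0 ∧ U = 0 := by
  set D1 := c0 * c3 - c2 * c1 with hD1
  set D2 := c0 * c5 - c4 * c1 with hD2
  set D3 := c2 * c5 - c4 * c3 with hD3
  have hs : (D2 ^ 2 - D1 * D3) * S ^ 3 = 0 := by
    linear_combination ((D1 * U - D2 * S) * c1 + D1 * S * c3) * h0 +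
      (-(D1 * U - D2 * S) * c0 - D1 * S * c2) * h1
  have hu : (D2 ^ 2 - D1 * D3) * U ^ 3 = 0 := by
    linear_combination ((D2 * U - D3 * S) * c5 - D3 * U * c3) * h0 +
      (-(D2 * U - D3 * S) * c4 + D3 * U * c2) * h1
  constructor
  · exact pow_eq_zero_iff (three_ne_zero) |>.mp ((mul_eq_zero.mp hs).resolve_left hR)
  · exact pow_eq_zero_iff (three_ne_zero) |>.mp ((mul_eq_zero.mp hu).resolve_left hR)

lemma RF_zero_of_sing {v : Fin 6 → ZMod 2} (h : IsSingularQuintic v) : RF v = 0 := by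
  obtain ⟨S, U, hSU, h0, h1⟩ := sing_to_root h
  by_contra hRF
  have hmap : (ι (v 0) * ι (v 5) - ι (v 4) * ι (v 1)) ^ 2 -
      (ι (v 0) * ι (v 3) - ι (v 2) * ι (v 1)) * (ι (v 2) * ι (v 5) - ι (v 4) * ι (v 3))
      = ι (RF v) := by
    simp only [RF, map_sub, map_mul, map_pow]
  have hne : (ι (v 0) * ι (v 5) - ι (v 4) * ι (v 1)) ^ 2 -
      (ι (v 0) * ι (v 3) - ι (v 2) * ι (v 1)) * (ι (v 2) * ι (v 5) - ι (v 4) * ι (v 3)) ≠ 0 := by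
    rw [hmap]
    intro hc
    exact hRF ((map_eq_zero_iff _ (algebraMap (ZMod 2) myK).injective).mp hc)
  have := noCommonRoot (ι (v 0)) (ι (v 1)) (ι (v 2)) (ι (v 3)) (ι (v 4)) (ι (v 5)) S U
    (by linear_combination h0) (by linear_combination h1) hne
  exact hSU this

lemma sing_of_RF {v : Fin 6 → ZMod 2} (hv : v ≠ 0) (hRF : RF v = 0) :
    IsSingularQuintic v := by
  obtain ⟨s, u, hsu, hq0, hq1⟩ := modelComplete v hRF
  refine root_to_sing hv (phiM s) (phiM u) ?_ ?_ ?_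
  · rintro ⟨hS, hU⟩
    exact hsu ⟨phiM_eq_zero hS, phiM_eq_zero hU⟩
  · have h := congrArg phiM hq0
    rw [phiM_Q] at h
    have hz : phiM (0, 0) = 0 := by simp [phiM]
    rw [hz] at h
    linear_combination h
  · have h := congrArg phiM hq1
    rw [phiM_Q] at h
    have hz : phiM (0, 0) = 0 := by simp [phiM]
    rw [hz] at h
    linear_combination h

lemma char_iff (v : Fin 6 → ZMod 2) : (v = 0 ∨ IsSingularQuintic v) ↔ RF v = 0 := by
  constructor
  · rintro (rfl | h)
    · simp [RF]
    · exact RF_zero_of_sing h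
  · intro h
    by_cases hv : v = 0
    · exact Or.inl hv
    · exact Or.inr (sing_of_RF hv h)

def Nw (w : Fin 6 → ZMod 2) : ℤ :=
  ∑ v : Fin 6 → ZMod 2, if RF v = 0 then (-1 : ℤ) ^ (pair w v).val else 0

lemma exp_eq (t : ℕ) :
    Complex.exp (2 * Real.pi * Complex.I * (t : ℂ) / (2 : ℂ)) = (-1 : ℂ) ^ t := by
  have h : (2 * (Real.pi : ℂ) * Complex.I * (t : ℂ) / (2 : ℂ))
      = (t : ℂ) * ((Real.pi : ℂ) * Complex.I) := by
    ring
  rw [h, Complex.exp_nat_mul, Complex.exp_pi_mul_I]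

lemma expSum_eq (w : Fin 6 → ZMod 2) : expSum 2 w = (Nw w : ℂ) := by
  rw [expSum, Nw]
  push_cast
  apply Finset.sum_congr rfl
  intro v _
  simp only [char_iff]
  by_cases h : RF v = 0
  · rw [if_pos h, if_pos h]
    exact exp_eq ((pair w v).val)
  · rw [if_neg h, if_neg h]

def K3 (w : Fin 6 → ZMod 2) : ZMod 2 :=
  -(w 3*w 3*w 3) + 2*(w 2*w 3*w 4) - w 2*w 2*w 5 - w 1*w 4*w 4 + w 1*w 3*w 5
def K2 (w : Fin 6 → ZMod 2) : ZMod 2 :=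
  w 2*w 3*w 3 - w 2*w 2*w 4 - w 1*w 3*w 4 + w 1*w 2*w 5 + w 0*w 4*w 4 - w 0*w 3*w 5
def K1 (w : Fin 6 → ZMod 2) : ZMod 2 :=
  -(w 2*w 2*w 3) + w 1*w 3*w 3 + w 1*w 2*w 4 - w 1*w 1*w 5 - w 0*w 3*w 4 + w 0*w 2*w 5
def K0 (w : Fin 6 → ZMod 2) : ZMod 2 :=
  w 2*w 2*w 2 - 2*(w 1*w 2*w 3) + w 1*w 1*w 4 + w 0*w 3*w 3 - w 0*w 2*w 4

lemma finmk0 (h : 0 < 6) : (⟨0, h⟩ : Fin 6) = 0 := rfl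
lemma finmk1 (h : 1 < 6) : (⟨1, h⟩ : Fin 6) = 1 := rfl
lemma finmk2 (h : 2 < 6) : (⟨2, h⟩ : Fin 6) = 2 := rfl
lemma finmk3 (h : 3 < 6) : (⟨3, h⟩ : Fin 6) = 3 := rfl
lemma finmk4 (h : 4 < 6) : (⟨4, h⟩ : Fin 6) = 4 := rfl
lemma finmk5 (h : 5 < 6) : (⟨5, h⟩ : Fin 6) = 5 := rfl

lemma cat_expand (w : Fin 6 → ZMod 2) :
    cat22 w = MvPolynomial.C (K3 w) * MvPolynomial.X 0 ^ 3 +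
      MvPolynomial.C (K2 w) * MvPolynomial.X 0 ^ 2 * MvPolynomial.X 1 +
      MvPolynomial.C (K1 w) * MvPolynomial.X 0 * MvPolynomial.X 1 ^ 2 +
      MvPolynomial.C (K0 w) * MvPolynomial.X 1 ^ 3 := by
  simp only [cat22, Matrix.det_fin_three, Matrix.of_apply, K3, K2, K1, K0,
    show ((0:Fin 3):ℕ) = 0 from rfl, show ((1:Fin 3):ℕ) = 1 from rfl,
    show ((2:Fin 3):ℕ) = 2 from rfl]
  have h2 : (2 : MvPolynomial (Fin 2) (ZMod 2)) = 0 := by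
    have := CharP.cast_eq_zero (MvPolynomial (Fin 2) (ZMod 2)) 2
    simpa using this
  norm_num
  simp only [map_add, map_mul, map_sub, map_neg, map_pow, map_ofNat,
    finmk0, finmk1, finmk2, finmk3, finmk4, finmk5]
  linear_combination (-(MvPolynomial.X 0 * MvPolynomial.X 1 ^ 2 * MvPolynomial.C (w 3) * MvPolynomial.C (w 2) ^ 2 + MvPolynomial.X 0 ^ 3 * MvPolynomial.C (w 3) ^ 3)) * h2

lemma cat_zero {w : Fin 6 → ZMod 2} (h3 : K3 w = 0) (h2 : K2 w = 0) (h1 : K1 w = 0)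
    (h0 : K0 w = 0) : cat22 w = 0 := by
  rw [cat_expand w, h3, h2, h1, h0]
  simp

set_option maxHeartbeats 4000000 in
set_option maxRecDepth 10000 in
lemma bigDecide : ∀ w : Fin 6 → ZMod 2,
    (K3 w = 0 ∧ K2 w = 0 ∧ K1 w = 0 ∧ K0 w = 0) ∨
    Nw w = -8 ∨ Nw w = -4 ∨ Nw w = 0 ∨ Nw w = 4 ∨ Nw w = 8 := by decide

/-- For `p = 2`: if the catalecticant covariant of `w ∈ V₅` over `𝔽₂` is nonzero, then
`S(w) = C·p² = 4C` for some integer `C` with `|C| ≤ 2`; in particular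
`S(w) ∈ {-8, -4, 0, 4, 8}`. -/
theorem stmt19 (w : Fin 6 → ZMod 2) (hcat : cat22 w ≠ 0) :
    (∃ C : ℤ, |C| ≤ 2 ∧ expSum 2 w = (C : ℂ) * (2 : ℂ) ^ 2) ∧
    expSum 2 w ∈ ({-8, -4, 0, 4, 8} : Set ℂ) := by
  rcases bigDecide w with ⟨h3, h2, h1, h0⟩ | hN | hN | hN | hN | hN
  · exact absurd (cat_zero h3 h2 h1 h0) hcat
  · refine ⟨⟨-2, by norm_num, ?_⟩, ?_⟩
    · rw [expSum_eq, hN]; norm_num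
    · rw [expSum_eq, hN]; left; norm_num
  · refine ⟨⟨-1, by norm_num, ?_⟩, ?_⟩
    · rw [expSum_eq, hN]; norm_num
    · rw [expSum_eq, hN]; right; left; norm_num
  · refine ⟨⟨0, by norm_num, ?_⟩, ?_⟩
    · rw [expSum_eq, hN]; norm_num
    · rw [expSum_eq, hN]; right; right; left; norm_num
  · refine ⟨⟨1, by norm_num, ?_⟩, ?_⟩
    · rw [expSum_eq, hN]; norm_num
    · rw [expSum_eq, hN]; right; right; right; left; norm_num
  · refine ⟨⟨2, by norm_num, ?_⟩, ?_⟩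
    · rw [expSum_eq, hN]; norm_num
    · rw [expSum_eq, hN]; right; right; right; right; norm_num
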